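/- arXiv:2403.04119 — 5 statements merged into one kernel-verified Lean document; each statement's English description precedes it below -/
import Mathlib

section
/- Let m ≥ 2 and let e ≥ 1 be an integer, and set n = 2m. Let δ_m = diag(ϖ^e, ϖ^{3e}, …, ϖ^{(2m−3)e}, ϖ^{(m−1)e}) (i.e. the i-th diagonal entry is ϖ^{(2i−1)e} for 1 ≤ i ≤ m−1 and the last entry is ϖ^{(m−1)e}), δ♯_m = diag(1, ϖ^{2e}, …, ϖ^{2(m−1)e}), v_m = [[1_{m−1}, yᵀ],[0,1]] with y = (ϖ^{−(m−1)e}, ϖ^{−(m−2)e}, …, ϖ^{−e}), and v♯_m = [[1_{m−1}, 0],[z, 1]] with z = (ϖ^{(m−1)e}, ϖ^{(m−2)e}, …, ϖ^{e}). Then the (S°_n, P_n(O))-double cosets S°_n · diag(v_m·δ_m, 1_m) · P_n(O) and S°_n · diag(v♯_m·δ♯_m, 1_m) · P_n(O) in GL_n(F) are equal. -/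
open Matrix

namespace ShalikaStmt11

variable {O F : Type*} [CommRing O] [IsDomain O] [IsDiscreteValuationRing O]
  [Field F] [Algebra O F] [IsFractionRing O F]

/-- `x ∈ F` lies in (the image of) `O`. -/
def IsInt (O : Type*) {F : Type*} [CommRing O] [Field F] [Algebra O F] (x : F) : Prop :=
  ∃ a : O, algebraMap O F a = x

/-- The mirabolic subgroup `P_N ⊂ GL_N(F)`: invertible matrices with last row `(0,…,0,1)`. -/
def Pset (F : Type*) [Field F] (N : ℕ) : Set (Matrix (Fin N) (Fin N) F) :=
  {p | IsUnit p.det ∧ ∀ i j : Fin N, (i : ℕ) = N - 1 →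
    p i j = if (j : ℕ) = N - 1 then 1 else 0}

/-- `P_N(O) = P_N ∩ GL_N(O)`. -/
def POset (O : Type*) (F : Type*) [CommRing O] [Field F] [Algebra O F] (N : ℕ) :
    Set (Matrix (Fin N) (Fin N) F) :=
  {p | p ∈ Pset F N ∧ (∀ i j, IsInt O (p i j)) ∧ ∃ u : Oˣ, algebraMap O F (u : O) = p.det}

/-- The block matrix `[[a,b],[0,a]]` of size `(M+M) × (M+M)`. -/
def shalikaMat {F : Type*} [Field F] {M : ℕ} (a b : Matrix (Fin M) (Fin M) F) :
    Matrix (Fin (M + M)) (Fin (M + M)) F :=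
  Matrix.reindex finSumFinEquiv finSumFinEquiv (Matrix.fromBlocks a b 0 a)

/-- The Shalika subgroup `S_{M+M} ⊂ GL_{M+M}(F)`. -/
def Sset (O : Type*) (F : Type*) [CommRing O] [Field F] [Algebra O F] (M : ℕ) :
    Set (Matrix (Fin (M + M)) (Fin (M + M)) F) :=
  {s | ∃ a b : Matrix (Fin M) (Fin M) F, IsUnit a.det ∧ s = shalikaMat a b}

/-- The embedding `g ↦ diag(g, 1_M)`. -/
def diagEmbed {F : Type*} [Field F] {M : ℕ} (g : Matrix (Fin M) (Fin M) F) :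
    Matrix (Fin (M + M)) (Fin (M + M)) F :=
  Matrix.reindex finSumFinEquiv finSumFinEquiv (Matrix.fromBlocks g 0 0 1)

/-- The upper unipotent matrix `[[1_r, yᵀ],[0,1]]`. -/
def uMat {F : Type*} [Field F] {r : ℕ} (y : Fin r → F) :
    Matrix (Fin (r + 1)) (Fin (r + 1)) F :=
  Matrix.of fun i j =>
    if i = j then 1
    else if (j : ℕ) = r then (if h : (i : ℕ) < r then y ⟨i, h⟩ else 0) else 0

/-- The lower unipotent matrix `[[1_r, 0],[z,1]]`. -/
def lMat {F : Type*} [Field F] {r : ℕ} (z : Fin r → F) :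
    Matrix (Fin (r + 1)) (Fin (r + 1)) F :=
  Matrix.of fun i j =>
    if i = j then 1
    else if (i : ℕ) = r then (if h : (j : ℕ) < r then z ⟨j, h⟩ else 0) else 0

section Generic

variable {R : Type*} [CommRing R] (x : R) (e m'' : ℕ)

/-- `b = 1 - ϖ^e ⬝ (subdiagonal ones, except last row)`. -/
def bM : Matrix (Fin (m'' + 2)) (Fin (m'' + 2)) R :=
  Matrix.of fun i j =>
    if (i : ℕ) = (j : ℕ) then 1
    else if (i : ℕ) = (j : ℕ) + 1 ∧ (i : ℕ) ≠ m'' + 1 then -(x ^ e) else 0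

/-- `a = b⁻¹`. -/
def aM : Matrix (Fin (m'' + 2)) (Fin (m'' + 2)) R :=
  Matrix.of fun i j =>
    if (i : ℕ) = (j : ℕ) then 1
    else if (j : ℕ) < (i : ℕ) ∧ (i : ℕ) ≠ m'' + 1 then x ^ (((i : ℕ) - (j : ℕ)) * e) else 0

def kM : Matrix (Fin (m'' + 2)) (Fin (m'' + 2)) R :=
  Matrix.of fun i j =>
    if (i : ℕ) = (j : ℕ) ∧ (i : ℕ) ≠ m'' + 1 then x ^ e
    else if (i : ℕ) = (j : ℕ) + 1 then -1
    else if (i : ℕ) = 0 ∧ (j : ℕ) = m'' + 1 then 1 else 0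

def kiM : Matrix (Fin (m'' + 2)) (Fin (m'' + 2)) R :=
  Matrix.of fun i j =>
    if (i : ℕ) = m'' + 1 then x ^ ((j : ℕ) * e)
    else if (i : ℕ) < (j : ℕ) then -(x ^ (((j : ℕ) - 1 - (i : ℕ)) * e)) else 0

lemma pow_exp_step (a b : ℕ) (h : a = b + 1) : x ^ (a * e) = x ^ e * x ^ (b * e) := by
  rw [← pow_add]; congr 1; subst h; ring

/-- Row structure of multiplication by `bM` on the left. -/
lemma bM_mul (X : Matrix (Fin (m'' + 2)) (Fin (m'' + 2)) R) (i j : Fin (m'' + 2)) :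
    (bM x e m'' * X) i j = X i j +
      (if h : (i : ℕ) ≠ 0 ∧ (i : ℕ) ≠ m'' + 1 then
        -(x ^ e) * X ⟨(i : ℕ) - 1, lt_of_le_of_lt (Nat.sub_le _ _) i.isLt⟩ j else 0) := by
  rw [Matrix.mul_apply]
  have hb : ∀ r : Fin (m'' + 2), bM x e m'' i r =
      (if r = i then (1 : R) else 0) +
      (if (i : ℕ) = (r : ℕ) + 1 ∧ (i : ℕ) ≠ m'' + 1 then -(x ^ e) else 0) := by
    intro r
    simp only [bM, Matrix.of_apply, Fin.ext_iff]
    split_ifs <;> first | omega | ring1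
  simp only [hb, add_mul, Finset.sum_add_distrib, ite_mul, one_mul, zero_mul,
    Finset.sum_ite_eq', Finset.mem_univ, if_true]
  congr 1
  by_cases h : (i : ℕ) ≠ 0 ∧ (i : ℕ) ≠ m'' + 1
  · rw [dif_pos h]
    rw [Finset.sum_eq_single (⟨(i : ℕ) - 1, lt_of_le_of_lt (Nat.sub_le _ _) i.isLt⟩ :
        Fin (m'' + 2))]
    · rw [if_pos ⟨by simp; omega, h.2⟩]
    · intro r _ hr
      rw [if_neg]
      rintro ⟨h1, -⟩
      exact hr (by apply Fin.ext; simp; omega)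
    · intro h'; exact absurd (Finset.mem_univ _) h'
  · rw [dif_neg h]
    apply Finset.sum_eq_zero
    intro r _
    rw [if_neg]
    rintro ⟨h1, h2⟩
    rcases not_and_or.mp h with h3 | h3 <;> omega

/-- Column structure of multiplication by `kM` on the right. -/
lemma mul_kM (X : Matrix (Fin (m'' + 2)) (Fin (m'' + 2)) R) (i j : Fin (m'' + 2)) :
    (X * kM x e m'') i j =
      if h : (j : ℕ) ≠ m'' + 1 then
        x ^ e * X i j - X i ⟨(j : ℕ) + 1, by have := j.isLt; omega⟩
      else X i ⟨0, by omega⟩ := by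
  rw [Matrix.mul_apply]
  by_cases hj : (j : ℕ) = m'' + 1
  · rw [dif_neg (not_not_intro hj)]
    have hk : ∀ r : Fin (m'' + 2), kM x e m'' r j =
        if r = (⟨0, by omega⟩ : Fin (m'' + 2)) then 1 else 0 := by
      intro r
      have := r.isLt
      simp only [kM, Matrix.of_apply, Fin.ext_iff]
      split_ifs <;> first | omega | rfl
    simp only [hk, mul_ite, mul_one, mul_zero, Finset.sum_ite_eq', Finset.mem_univ, if_true]
  · rw [dif_pos hj]
    have hk : ∀ r : Fin (m'' + 2), kM x e m'' r j =
        (if r = j then x ^ e else 0) +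
        (if r = (⟨(j : ℕ) + 1, by have := j.isLt; omega⟩ : Fin (m'' + 2)) then -1 else 0) := by
      intro r
      have := r.isLt
      simp only [kM, Matrix.of_apply, Fin.ext_iff]
      split_ifs <;> first | omega | ring1
    simp only [hk, mul_add, Finset.sum_add_distrib, mul_ite, mul_one, mul_zero, mul_neg,
      Finset.sum_ite_eq', Finset.mem_univ, if_true]
    ring

lemma bM_mul_aM : bM x e m'' * aM x e m'' = 1 := by
  ext i j
  rw [bM_mul]
  have hi := i.isLt
  have hj := j.isLt
  simp only [aM, Matrix.of_apply, Matrix.one_apply, Fin.val_mk, Fin.ext_iff,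
    Nat.zero_mul, pow_zero]
  by_cases h : (i : ℕ) ≠ 0 ∧ (i : ℕ) ≠ m'' + 1
  · rw [dif_pos h]
    split_ifs <;>
      first
      | omega
      | ring1
      | (rw [pow_exp_step x e ((i : ℕ) - (j : ℕ)) ((i : ℕ) - 1 - (j : ℕ)) (by omega)]; ring1)
      | (rw [pow_exp_step x e ((i : ℕ) - (j : ℕ)) ((i : ℕ) - 1 - (j : ℕ)) (by omega),
          show (i : ℕ) - 1 - (j : ℕ) = 0 by omega, Nat.zero_mul, pow_zero]; ring1)
  · rw [dif_neg h]
    split_ifs <;> first | omega | ring1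

lemma kiM_mul_kM : kiM x e m'' * kM x e m'' = 1 := by
  ext i j
  rw [mul_kM]
  have hi := i.isLt
  have hj := j.isLt
  by_cases hj' : (j : ℕ) ≠ m'' + 1
  · rw [dif_pos hj']
    simp only [kiM, Matrix.of_apply, Matrix.one_apply, Fin.val_mk, Fin.ext_iff]
    split_ifs <;>
      first
      | omega
      | ring1
      | (rw [pow_exp_step x e ((j : ℕ) + 1) (j : ℕ) rfl]; ring1)
      | (rw [pow_exp_step x e ((j : ℕ) + 1 - 1 - (i : ℕ)) ((j : ℕ) - 1 - (i : ℕ)) (by omega)];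
          ring1)
      | (rw [show (j : ℕ) + 1 - 1 - (i : ℕ) = 0 by omega, Nat.zero_mul, pow_zero]; ring1)
  · rw [dif_neg hj']
    simp only [kiM, Matrix.of_apply, Matrix.one_apply, Fin.val_mk, Fin.ext_iff,
      Nat.zero_mul, pow_zero]
    split_ifs <;> first | omega | ring1

lemma aM_mul_bM : aM x e m'' * bM x e m'' = 1 :=
  mul_eq_one_comm.mp (bM_mul_aM x e m'')

lemma kM_mul_kiM : kM x e m'' * kiM x e m'' = 1 :=
  mul_eq_one_comm.mp (kiM_mul_kM x e m'')

end Generic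

section Maps

variable {R S : Type*} [CommRing R] [CommRing S] (f : R →+* S) (x : R) (e m'' : ℕ)

lemma bM_map : (bM x e m'').map f = bM (f x) e m'' := by
  ext i j
  simp only [bM, Matrix.map_apply, Matrix.of_apply, apply_ite f, _root_.map_one, _root_.map_neg, _root_.map_pow,
    _root_.map_zero]

lemma aM_map : (aM x e m'').map f = aM (f x) e m'' := by
  ext i j
  simp only [aM, Matrix.map_apply, Matrix.of_apply, apply_ite f, _root_.map_one, _root_.map_pow, _root_.map_zero]

lemma kM_map : (kM x e m'').map f = kM (f x) e m'' := by
  ext i j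
  simp only [kM, Matrix.map_apply, Matrix.of_apply, apply_ite f, _root_.map_one, _root_.map_neg, _root_.map_pow,
    _root_.map_zero]

lemma kiM_map : (kiM x e m'').map f = kiM (f x) e m'' := by
  ext i j
  simp only [kiM, Matrix.map_apply, Matrix.of_apply, apply_ite f, _root_.map_one, _root_.map_neg, _root_.map_pow,
    _root_.map_zero]

end Maps

section FieldSide

variable {F : Type*} [Field F] (x : F) (e m'' : ℕ)

def g1M : Matrix (Fin (m'' + 2)) (Fin (m'' + 2)) F :=
  uMat (fun i : Fin (m'' + 1) => (x ^ ((m'' + 1 - (i : ℕ)) * e))⁻¹) *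
    diagonal (Fin.snoc (fun i : Fin (m'' + 1) => x ^ ((2 * (i : ℕ) + 1) * e))
      (x ^ ((m'' + 1) * e)))

def g2M : Matrix (Fin (m'' + 2)) (Fin (m'' + 2)) F :=
  lMat (fun i : Fin (m'' + 1) => x ^ ((m'' + 1 - (i : ℕ)) * e)) *
    diagonal (fun i : Fin (m'' + 2) => x ^ (2 * (i : ℕ) * e))

lemma inv_pow_sub (hx : x ≠ 0) (a b : ℕ) (hab : a ≤ b) :
    (x ^ (a * e))⁻¹ * x ^ (b * e) = x ^ ((b - a) * e) := by
  rw [inv_mul_eq_iff_eq_mul₀ (pow_ne_zero _ hx), ← pow_add, ← Nat.add_mul,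
    show a + (b - a) = b by omega]

lemma g1_apply (hx : x ≠ 0) (i j : Fin (m'' + 2)) :
    g1M x e m'' i j = if (j : ℕ) = m'' + 1 then x ^ ((i : ℕ) * e)
      else if (i : ℕ) = (j : ℕ) then x ^ ((2 * (j : ℕ) + 1) * e) else 0 := by
  have hi := i.isLt
  rw [g1M, Matrix.mul_diagonal]
  induction j using Fin.lastCases with
  | last =>
      rw [Fin.snoc_last]
      simp only [uMat, Matrix.of_apply, Fin.ext_iff, Fin.val_last, if_true]
      by_cases hij : (i : ℕ) = m'' + 1
      · rw [if_pos hij, one_mul, show (i : ℕ) = m'' + 1 from hij]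
      · rw [if_neg hij, dif_pos (show (i : ℕ) < m'' + 1 by omega),
          inv_pow_sub x e hx (m'' + 1 - (i : ℕ)) (m'' + 1) (by omega),
          show m'' + 1 - (m'' + 1 - (i : ℕ)) = (i : ℕ) by omega]
  | cast j' =>
      rw [Fin.snoc_castSucc]
      simp only [uMat, Matrix.of_apply, Fin.ext_iff, Fin.coe_castSucc]
      have h1 : (j' : ℕ) ≠ m'' + 1 := by have := j'.isLt; omega
      simp only [if_neg h1]
      by_cases hij : (i : ℕ) = (j' : ℕ)
      · simp only [if_pos hij, one_mul]
      · simp only [if_neg hij, zero_mul]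

lemma g2_apply (i j : Fin (m'' + 2)) :
    g2M x e m'' i j = if (i : ℕ) = (j : ℕ) then x ^ (2 * (j : ℕ) * e)
      else if (i : ℕ) = m'' + 1 then x ^ ((m'' + 1 + (j : ℕ)) * e) else 0 := by
  have hj := j.isLt
  rw [g2M, Matrix.mul_diagonal]
  simp only [lMat, Matrix.of_apply, Fin.ext_iff]
  by_cases hij : (i : ℕ) = (j : ℕ)
  · simp only [if_pos hij, one_mul]
  · simp only [if_neg hij]
    by_cases hi : (i : ℕ) = m'' + 1
    · simp only [if_pos hi]
      rw [dif_pos (show (j : ℕ) < m'' + 1 by omega), ← pow_add, ← Nat.add_mul,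
        show m'' + 1 - (j : ℕ) + 2 * (j : ℕ) = m'' + 1 + (j : ℕ) by omega]
    · simp only [if_neg hi, zero_mul]

lemma core (hx : x ≠ 0) :
    bM x e m'' * g1M x e m'' = g2M x e m'' * kM x e m'' := by
  ext i j
  rw [bM_mul, mul_kM]
  have hi := i.isLt
  have hj := j.isLt
  simp only [g1_apply x e m'' hx, g2_apply x e m'', Fin.val_mk, Nat.mul_zero, Nat.zero_mul,
    pow_zero, Nat.add_zero]
  split_ifs <;>
    first
    | omega
    | ring1
    | (rw [show (i : ℕ) = 0 from by omega, Nat.zero_mul, pow_zero]; ring1)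
    | (rw [show (i : ℕ) = m'' + 1 from by omega]; ring1)
    | (rw [pow_exp_step x e (i : ℕ) ((i : ℕ) - 1) (by omega)]; ring1)
    | (rw [pow_exp_step x e (2 * (j : ℕ) + 1) (2 * (j : ℕ)) rfl]; ring1)
    | (rw [pow_exp_step x e (2 * ((j : ℕ) + 1)) (2 * (j : ℕ) + 1) (by ring)]; ring1)
    | (rw [pow_exp_step x e (m'' + 1 + ((j : ℕ) + 1)) (m'' + 1 + (j : ℕ)) (by ring)]; ring1)
    | (rw [pow_exp_step x e (2 * ((j : ℕ) + 1)) (m'' + 1 + (j : ℕ)) (by omega)]; ring1)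

end FieldSide



section Blocks

lemma reindex_mul {R : Type*} [CommRing R] {M : ℕ}
    (A B : Matrix (Fin M ⊕ Fin M) (Fin M ⊕ Fin M) R) :
    (Matrix.reindex finSumFinEquiv finSumFinEquiv A) *
      (Matrix.reindex finSumFinEquiv finSumFinEquiv B) =
      Matrix.reindex finSumFinEquiv finSumFinEquiv (A * B) := by
  simp only [Matrix.reindex_apply]
  exact Matrix.submatrix_mul_equiv A B _ _ _

variable {F' : Type*} [Field F'] (x : F') (e m'' : ℕ)

lemma identity1 (hx : x ≠ 0) :
    diagEmbed (g1M x e m'') = shalikaMat (aM x e m'') 0 * diagEmbed (g2M x e m'') *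
      Matrix.reindex finSumFinEquiv finSumFinEquiv
        (Matrix.fromBlocks (kM x e m'') 0 0 (bM x e m'')) := by
  have h1 : aM x e m'' * g2M x e m'' * kM x e m'' = g1M x e m'' := by
    rw [mul_assoc, ← core x e m'' hx, ← mul_assoc, aM_mul_bM, one_mul]
  rw [shalikaMat, diagEmbed, diagEmbed, reindex_mul, reindex_mul]
  congr 1
  rw [Matrix.fromBlocks_multiply, Matrix.fromBlocks_multiply]
  simp only [Matrix.mul_zero, Matrix.zero_mul, add_zero, zero_add, Matrix.mul_one,
    Matrix.one_mul, mul_assoc]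
  rw [← mul_assoc, h1, aM_mul_bM]

lemma identity2 (hx : x ≠ 0) :
    diagEmbed (g2M x e m'') = shalikaMat (bM x e m'') 0 * diagEmbed (g1M x e m'') *
      Matrix.reindex finSumFinEquiv finSumFinEquiv
        (Matrix.fromBlocks (kiM x e m'') 0 0 (aM x e m'')) := by
  have h1 : bM x e m'' * g1M x e m'' * kiM x e m'' = g2M x e m'' := by
    rw [core x e m'' hx, mul_assoc, kM_mul_kiM, mul_one]
  rw [shalikaMat, diagEmbed, diagEmbed, reindex_mul, reindex_mul]
  congr 1
  rw [Matrix.fromBlocks_multiply, Matrix.fromBlocks_multiply]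
  simp only [Matrix.mul_zero, Matrix.zero_mul, add_zero, zero_add, Matrix.mul_one,
    Matrix.one_mul, mul_assoc]
  rw [← mul_assoc, h1, bM_mul_aM]

lemma sum_cases {M : ℕ} (j : Fin (M + M)) :
    (∃ j' : Fin M, j = finSumFinEquiv (Sum.inl j') ∧ (j : ℕ) = (j' : ℕ)) ∨
    (∃ j' : Fin M, j = finSumFinEquiv (Sum.inr j') ∧ (j : ℕ) = M + (j' : ℕ)) := by
  rcases h : finSumFinEquiv.symm j with j' | j'
  · left
    refine ⟨j', by rw [← Equiv.apply_symm_apply finSumFinEquiv j, h], ?_⟩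
    rw [← Equiv.apply_symm_apply finSumFinEquiv j, h]
    simp only [finSumFinEquiv_apply_left, Fin.coe_castAdd]
  · right
    refine ⟨j', by rw [← Equiv.apply_symm_apply finSumFinEquiv j, h], ?_⟩
    rw [← Equiv.apply_symm_apply finSumFinEquiv j, h]
    simp only [finSumFinEquiv_apply_right, Fin.coe_natAdd]

lemma reindex_entry {R : Type*} [CommRing R] {M : ℕ}
    (A : Matrix (Fin M ⊕ Fin M) (Fin M ⊕ Fin M) R) (p q : Fin M ⊕ Fin M) :
    (Matrix.reindex finSumFinEquiv finSumFinEquiv A) (finSumFinEquiv p) (finSumFinEquiv q) =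
      A p q := by
  simp [Matrix.reindex_apply]

/-- The last-row condition for a reindexed block matrix with lower-left block 0. -/
lemma lastRow_cond {F' : Type*} [Field F'] {m'' : ℕ}
    (A B D : Matrix (Fin (m'' + 2)) (Fin (m'' + 2)) F')
    (hD : ∀ j' : Fin (m'' + 2), D ⟨m'' + 1, by omega⟩ j' = if (j' : ℕ) = m'' + 1 then 1 else 0) :
    ∀ i j : Fin ((m'' + 2) + (m'' + 2)), (i : ℕ) = (m'' + 2) + (m'' + 2) - 1 →
      (Matrix.reindex finSumFinEquiv finSumFinEquiv (Matrix.fromBlocks A B 0 D)) i j =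
        if (j : ℕ) = (m'' + 2) + (m'' + 2) - 1 then 1 else 0 := by
  intro i j hij
  have hi : i = finSumFinEquiv (Sum.inr (⟨m'' + 1, by omega⟩ : Fin (m'' + 2))) := by
    apply Fin.ext
    simp only [finSumFinEquiv_apply_right, Fin.coe_natAdd, Fin.val_mk]
    omega
  rcases sum_cases j with ⟨j', rfl, hval⟩ | ⟨j', rfl, hval⟩
  · rw [hi, reindex_entry]
    have hj := j'.isLt
    rw [Matrix.fromBlocks_apply₂₁, if_neg (by omega)]
    rfl
  · rw [hi, reindex_entry, Matrix.fromBlocks_apply₂₂, hD j']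
    have hj := j'.isLt
    split_ifs <;> first | rfl | omega

lemma aM_lastRow {R : Type*} [CommRing R] (x : R) (e m'' : ℕ) (j' : Fin (m'' + 2)) :
    aM x e m'' ⟨m'' + 1, by omega⟩ j' = if (j' : ℕ) = m'' + 1 then 1 else 0 := by
  simp only [aM, Matrix.of_apply, Fin.val_mk]
  split_ifs <;> first | rfl | omega

lemma bM_lastRow {R : Type*} [CommRing R] (x : R) (e m'' : ℕ) (j' : Fin (m'' + 2)) :
    bM x e m'' ⟨m'' + 1, by omega⟩ j' = if (j' : ℕ) = m'' + 1 then 1 else 0 := by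
  simp only [bM, Matrix.of_apply, Fin.val_mk]
  split_ifs <;> first | rfl | omega

end Blocks

section SetLemmas

lemma isInt_mul {x y : F} (hx : IsInt O x) (hy : IsInt O y) : IsInt O (x * y) := by
  obtain ⟨a, rfl⟩ := hx; obtain ⟨b, rfl⟩ := hy
  exact ⟨a * b, map_mul _ _ _⟩

lemma isInt_sum {s : Finset (Fin n)} {f : Fin n → F} (h : ∀ r ∈ s, IsInt O (f r)) :
    IsInt O (∑ r ∈ s, f r) :=
  Finset.sum_induction f (IsInt O)
    (fun _ _ ⟨a, ha⟩ ⟨b, hb⟩ => ⟨a + b, by rw [map_add, ha, hb]⟩) ⟨0, map_zero _⟩ h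

lemma Pset_mul {N : ℕ} (hN : 0 < N) {p q : Matrix (Fin N) (Fin N) F}
    (hp : p ∈ Pset F N) (hq : q ∈ Pset F N) : p * q ∈ Pset F N := by
  refine ⟨by rw [Matrix.det_mul]; exact hp.1.mul hq.1, ?_⟩
  intro i j hij
  rw [Matrix.mul_apply]
  have key : ∀ r : Fin N, p i r * q r j =
      if r = (⟨N - 1, by omega⟩ : Fin N) then q r j else 0 := by
    intro r
    rw [hp.2 i r hij, ite_mul, one_mul, zero_mul]
    exact if_congr (by simp [Fin.ext_iff]) rfl rfl
  rw [Finset.sum_congr rfl fun r _ => key r, Finset.sum_ite_eq' Finset.univ _ (fun r => q r j),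
    if_pos (Finset.mem_univ _), hq.2 _ j (by simp)]

lemma POset_mul {N : ℕ} (hN : 0 < N) {p q : Matrix (Fin N) (Fin N) F}
    (hp : p ∈ POset O F N) (hq : q ∈ POset O F N) : p * q ∈ POset O F N := by
  refine ⟨Pset_mul hN hp.1 hq.1, ?_, ?_⟩
  · intro i j
    rw [Matrix.mul_apply]
    exact isInt_sum fun r _ => isInt_mul (hp.2.1 i r) (hq.2.1 r j)
  · obtain ⟨u, hu⟩ := hp.2.2
    obtain ⟨v, hv⟩ := hq.2.2
    exact ⟨u * v, by rw [Units.val_mul, _root_.map_mul, hu, hv, Matrix.det_mul]⟩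

lemma Sset_mul {M : ℕ} {s s' : Matrix (Fin (M + M)) (Fin (M + M)) F}
    (hs : s ∈ Sset O F M) (hs' : s' ∈ Sset O F M) : s * s' ∈ Sset O F M := by
  obtain ⟨a, b, ha, rfl⟩ := hs
  obtain ⟨a', b', ha', rfl⟩ := hs'
  refine ⟨a * a', a * b' + b * a', by rw [Matrix.det_mul]; exact ha.mul ha', ?_⟩
  rw [shalikaMat, shalikaMat, shalikaMat, reindex_mul]
  congr 1
  rw [Matrix.fromBlocks_multiply]
  simp only [Matrix.mul_zero, Matrix.zero_mul, add_zero, zero_add]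

end SetLemmas



lemma identity1' {F' : Type*} [Field F'] (x : F') (e m'' : ℕ) (hx : x ≠ 0)
    (s k : Matrix (Fin ((m'' + 2) + (m'' + 2))) (Fin ((m'' + 2) + (m'' + 2))) F') :
    s * diagEmbed (g1M x e m'') * k =
      (s * shalikaMat (aM x e m'') 0) * diagEmbed (g2M x e m'') *
        (Matrix.reindex finSumFinEquiv finSumFinEquiv
          (Matrix.fromBlocks (kM x e m'') 0 0 (bM x e m'')) * k) := by
  rw [identity1 x e m'' hx]
  simp only [mul_assoc]

lemma identity2' {F' : Type*} [Field F'] (x : F') (e m'' : ℕ) (hx : x ≠ 0)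
    (s k : Matrix (Fin ((m'' + 2) + (m'' + 2))) (Fin ((m'' + 2) + (m'' + 2))) F') :
    s * diagEmbed (g2M x e m'') * k =
      (s * shalikaMat (bM x e m'') 0) * diagEmbed (g1M x e m'') *
        (Matrix.reindex finSumFinEquiv finSumFinEquiv
          (Matrix.fromBlocks (kiM x e m'') 0 0 (aM x e m'')) * k) := by
  rw [identity2 x e m'' hx]
  simp only [mul_assoc]

section Members

lemma shalika_aux_mem {m'' : ℕ} {A A' : Matrix (Fin (m'' + 2)) (Fin (m'' + 2)) F}
    (hAA' : A * A' = 1)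
    (hrow : ∀ j' : Fin (m'' + 2),
      A ⟨m'' + 1, by omega⟩ j' = if (j' : ℕ) = m'' + 1 then 1 else 0) :
    shalikaMat A 0 ∈ Sset O F (m'' + 2) ∩ Pset F ((m'' + 2) + (m'' + 2)) := by
  have hdet : IsUnit A.det :=
    IsUnit.of_mul_eq_one A'.det (by rw [← Matrix.det_mul, hAA', Matrix.det_one])
  refine ⟨⟨A, 0, hdet, rfl⟩, ?_, ?_⟩
  · rw [shalikaMat, Matrix.det_reindex_self, Matrix.det_fromBlocks_zero₂₁]
    exact hdet.mul hdet
  · exact lastRow_cond A 0 A hrow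

lemma k_aux_mem {m'' : ℕ} (K B K' B' : Matrix (Fin (m'' + 2)) (Fin (m'' + 2)) O)
    (hK : K * K' = 1) (hB : B * B' = 1)
    (hrow : ∀ j' : Fin (m'' + 2),
      B ⟨m'' + 1, by omega⟩ j' = if (j' : ℕ) = m'' + 1 then (1 : O) else 0) :
    Matrix.reindex finSumFinEquiv finSumFinEquiv
        (Matrix.fromBlocks (K.map (algebraMap O F)) 0 0 (B.map (algebraMap O F)))
      ∈ POset O F ((m'' + 2) + (m'' + 2)) := by
  have hdetO : IsUnit (K.det * B.det) := by
    refine IsUnit.of_mul_eq_one (K'.det * B'.det) ?_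
    rw [mul_mul_mul_comm, ← Matrix.det_mul, ← Matrix.det_mul, hK, hB, Matrix.det_one, one_mul]
  have hdetF : (Matrix.reindex finSumFinEquiv finSumFinEquiv
      (Matrix.fromBlocks (K.map (algebraMap O F)) 0 0 (B.map (algebraMap O F)))).det =
      algebraMap O F (K.det * B.det) := by
    rw [Matrix.det_reindex_self, Matrix.det_fromBlocks_zero₂₁, _root_.map_mul,
      RingHom.map_det, RingHom.map_det, RingHom.mapMatrix_apply, RingHom.mapMatrix_apply]
  refine ⟨⟨?_, ?_⟩, ?_, ?_⟩
  · rw [hdetF]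
    exact hdetO.map (algebraMap O F)
  · refine lastRow_cond _ 0 _ ?_
    intro j'
    rw [Matrix.map_apply, hrow j', apply_ite (algebraMap O F), _root_.map_one, _root_.map_zero]
  · intro i j
    rcases sum_cases i with ⟨i', rfl, _⟩ | ⟨i', rfl, _⟩ <;>
      rcases sum_cases j with ⟨j', rfl, _⟩ | ⟨j', rfl, _⟩ <;>
      rw [reindex_entry]
    · exact ⟨K i' j', Matrix.map_apply.symm⟩
    · exact ⟨0, by simp⟩
    · exact ⟨0, by simp⟩
    · exact ⟨B i' j', Matrix.map_apply.symm⟩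
  · exact ⟨hdetO.unit, by rw [IsUnit.unit_spec, hdetF]⟩

lemma s1_mem (ϖ : O) (e m'' : ℕ) :
    shalikaMat (aM (algebraMap O F ϖ) e m'') 0 ∈
      Sset O F (m'' + 2) ∩ Pset F ((m'' + 2) + (m'' + 2)) :=
  shalika_aux_mem (aM_mul_bM _ e m'') (aM_lastRow _ e m'')

lemma s2_mem (ϖ : O) (e m'' : ℕ) :
    shalikaMat (bM (algebraMap O F ϖ) e m'') 0 ∈
      Sset O F (m'' + 2) ∩ Pset F ((m'' + 2) + (m'' + 2)) :=
  shalika_aux_mem (bM_mul_aM _ e m'') (bM_lastRow _ e m'')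

lemma k1_mem (ϖ : O) (e m'' : ℕ) :
    Matrix.reindex finSumFinEquiv finSumFinEquiv
        (Matrix.fromBlocks (kM (algebraMap O F ϖ) e m'') 0 0 (bM (algebraMap O F ϖ) e m''))
      ∈ POset O F ((m'' + 2) + (m'' + 2)) := by
  rw [← kM_map (algebraMap O F) ϖ e m'', ← bM_map (algebraMap O F) ϖ e m'']
  exact k_aux_mem _ _ _ _ (kM_mul_kiM ϖ e m'') (bM_mul_aM ϖ e m'')
    (bM_lastRow ϖ e m'')

lemma k2_mem (ϖ : O) (e m'' : ℕ) :
    Matrix.reindex finSumFinEquiv finSumFinEquiv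
        (Matrix.fromBlocks (kiM (algebraMap O F ϖ) e m'') 0 0 (aM (algebraMap O F ϖ) e m''))
      ∈ POset O F ((m'' + 2) + (m'' + 2)) := by
  rw [← kiM_map (algebraMap O F) ϖ e m'', ← aM_map (algebraMap O F) ϖ e m'']
  exact k_aux_mem _ _ _ _ (kiM_mul_kM ϖ e m'') (aM_mul_bM ϖ e m'')
    (aM_lastRow ϖ e m'')

end Members

/-- For `m ≥ 2` (`m = m'' + 2`) and `e ≥ 1`, the `(S°_n, P_n(O))`-double cosets of
`diag(v_m · δ_m, 1_m)` and `diag(v♯_m · δ♯_m, 1_m)` in `GL_n(F)` coincide, where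
`δ_m = diag(ϖ^e, ϖ^{3e}, …, ϖ^{(2m−3)e}, ϖ^{(m−1)e})`, `δ♯_m = diag(1, ϖ^{2e}, …, ϖ^{2(m−1)e})`,
`v_m = u((ϖ^{−(m−1)e}, …, ϖ^{−e}))` and `v♯_m = ū((ϖ^{(m−1)e}, …, ϖ^{e}))`. -/
theorem stmt11 (ϖ : O) (hϖ : Irreducible ϖ) (m'' e : ℕ) (he : 1 ≤ e) :
    {g : Matrix (Fin ((m'' + 2) + (m'' + 2))) (Fin ((m'' + 2) + (m'' + 2))) F |
      ∃ s ∈ Sset O F (m'' + 2) ∩ Pset F ((m'' + 2) + (m'' + 2)),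
        ∃ k ∈ POset O F ((m'' + 2) + (m'' + 2)),
          g = s * diagEmbed
            (uMat (fun i : Fin (m'' + 1) =>
                ((algebraMap O F ϖ) ^ ((m'' + 1 - (i : ℕ)) * e))⁻¹) *
              diagonal (Fin.snoc
                (fun i : Fin (m'' + 1) => (algebraMap O F ϖ) ^ ((2 * (i : ℕ) + 1) * e))
                ((algebraMap O F ϖ) ^ ((m'' + 1) * e)))) * k} =
    {g : Matrix (Fin ((m'' + 2) + (m'' + 2))) (Fin ((m'' + 2) + (m'' + 2))) F |
      ∃ s ∈ Sset O F (m'' + 2) ∩ Pset F ((m'' + 2) + (m'' + 2)),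
        ∃ k ∈ POset O F ((m'' + 2) + (m'' + 2)),
          g = s * diagEmbed
            (lMat (fun i : Fin (m'' + 1) =>
                (algebraMap O F ϖ) ^ ((m'' + 1 - (i : ℕ)) * e)) *
              diagonal
                (fun i : Fin (m'' + 2) => (algebraMap O F ϖ) ^ (2 * (i : ℕ) * e))) * k} := by
  have hx : (algebraMap O F ϖ) ≠ 0 := fun h =>
    hϖ.ne_zero (IsFractionRing.injective O F (by rw [h, map_zero]))
  ext g
  simp only [Set.mem_setOf_eq]
  constructor
  · rintro ⟨s, hs, k, hk, rfl⟩
    refine ⟨s * shalikaMat (aM (algebraMap O F ϖ) e m'') 0,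
      ⟨Sset_mul hs.1 (s1_mem ϖ e m'').1, Pset_mul (by omega) hs.2 (s1_mem ϖ e m'').2⟩,
      Matrix.reindex finSumFinEquiv finSumFinEquiv
        (Matrix.fromBlocks (kM (algebraMap O F ϖ) e m'') 0 0
          (bM (algebraMap O F ϖ) e m'')) * k,
      POset_mul (by omega) (k1_mem ϖ e m'') hk, ?_⟩
    exact identity1' (algebraMap O F ϖ) e m'' hx s k
  · rintro ⟨s, hs, k, hk, rfl⟩
    refine ⟨s * shalikaMat (bM (algebraMap O F ϖ) e m'') 0,
      ⟨Sset_mul hs.1 (s2_mem ϖ e m'').1, Pset_mul (by omega) hs.2 (s2_mem ϖ e m'').2⟩,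
      Matrix.reindex finSumFinEquiv finSumFinEquiv
        (Matrix.fromBlocks (kiM (algebraMap O F ϖ) e m'') 0 0
          (aM (algebraMap O F ϖ) e m'')) * k,
      POset_mul (by omega) (k2_mem ϖ e m'') hk, ?_⟩
    exact identity2' (algebraMap O F ϖ) e m'' hx s k

end ShalikaStmt11
end

section
/- Let r ≥ 2 and let c be a nonnegative integer. Then GL_r(O) ∩ diag(1_{r−1}, ϖ^c) · GL_r(O) · diag(1_{r−1}, ϖ^c)^{-1} = {k ∈ GL_r(O) : k_{r,1}, …, k_{r,r−1} ∈ 𝔭^c}. -/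
open Matrix

namespace ShalikaStmt12

/-- For `r ≥ 2` and `c ≥ 0`:
`GL_r(O) ∩ diag(1_{r−1}, ϖ^c) · GL_r(O) · diag(1_{r−1}, ϖ^c)⁻¹
  = {k ∈ GL_r(O) : k_{r,1}, …, k_{r,r−1} ∈ 𝔭^c}`. -/
theorem stmt12 {O F : Type*} [CommRing O] [IsDomain O] [IsDiscreteValuationRing O]
    [Field F] [Algebra O F] [IsFractionRing O F]
    (ϖ : O) (hϖ : Irreducible ϖ) (r c : ℕ) (hr : 2 ≤ r) :
    let GLO : Set (Matrix (Fin r) (Fin r) F) :=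
      {g | (∀ i j, ∃ a : O, algebraMap O F a = g i j) ∧
        ∃ u : Oˣ, algebraMap O F (u : O) = g.det}
    let D : Matrix (Fin r) (Fin r) F :=
      diagonal (fun i => if (i : ℕ) < r - 1 then 1 else (algebraMap O F ϖ) ^ c)
    {k | k ∈ GLO ∧ ∃ g ∈ GLO, k = D * g * D⁻¹} =
      {k | k ∈ GLO ∧ ∀ j : Fin r, (j : ℕ) < r - 1 →
        ∃ a : O, algebraMap O F (ϖ ^ c * a) = k ⟨r - 1, by omega⟩ j} := by
  intro GLO D
  have hπ : (algebraMap O F ϖ) ≠ 0 := by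
    simpa using (map_ne_zero_iff _ (IsFractionRing.injective O F)).mpr hϖ.ne_zero
  set d : Fin r → F := fun i => if (i : ℕ) < r - 1 then 1 else (algebraMap O F ϖ) ^ c
    with hd_def
  have hd : ∀ i, d i ≠ 0 := by
    intro i
    simp only [hd_def]
    split
    · exact one_ne_zero
    · exact pow_ne_zero _ hπ
  have hD : D = diagonal d := rfl
  have hDinv : D⁻¹ = diagonal (fun i => (d i)⁻¹) := by
    refine Matrix.inv_eq_right_inv ?_
    rw [hD, Matrix.diagonal_mul_diagonal]
    have : (fun i => d i * (d i)⁻¹) = fun _ => (1 : F) :=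
      funext fun i => mul_inv_cancel₀ (hd i)
    rw [this, Matrix.diagonal_one]
  have hDdet : IsUnit D.det := by
    rw [hD, Matrix.det_diagonal]
    exact isUnit_iff_ne_zero.mpr (Finset.prod_ne_zero_iff.mpr fun i _ => hd i)
  ext k
  simp only [Set.mem_setOf_eq]
  constructor
  · rintro ⟨hk, g, ⟨hgO, _⟩, rfl⟩
    refine ⟨hk, fun j hj => ?_⟩
    obtain ⟨a, ha⟩ := hgO ⟨r - 1, by omega⟩ j
    refine ⟨a, ?_⟩
    rw [hDinv, Matrix.mul_diagonal, hD, Matrix.diagonal_mul]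
    simp only [hd_def]
    rw [if_neg (by simp), if_pos (by simpa using hj)]
    rw [← ha]
    simp [_root_.map_mul, map_pow]
  · rintro ⟨⟨hkO, hkdet⟩, hrow⟩
    refine ⟨⟨hkO, hkdet⟩, D⁻¹ * k * D, ⟨?_, ?_⟩, ?_⟩
    · intro i j
      rw [hD, Matrix.mul_diagonal, hDinv, Matrix.diagonal_mul]
      by_cases hi : (i : ℕ) < r - 1
      · obtain ⟨a, ha⟩ := hkO i j
        by_cases hj : (j : ℕ) < r - 1
        · exact ⟨a, by simp [hd_def, hi, hj, ha]⟩
        · refine ⟨a * ϖ ^ c, ?_⟩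
          simp only [hd_def, if_pos hi, if_neg hj, inv_one, one_mul, _root_.map_mul, map_pow, ha]
      · have hi' : i = ⟨r - 1, by omega⟩ := Fin.ext (by have := i.isLt; simp; omega)
        by_cases hj : (j : ℕ) < r - 1
        · obtain ⟨a, ha⟩ := hrow j hj
          refine ⟨a, ?_⟩
          rw [hi'] at *
          rw [← ha]
          simp only [hd_def, if_neg (lt_irrefl (r - 1)), if_pos hj, mul_one,
            _root_.map_mul, map_pow]
          rw [inv_mul_cancel_left₀ (pow_ne_zero c hπ)]
        · obtain ⟨a, ha⟩ := hkO i j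
          refine ⟨a, ?_⟩
          simp only [hd_def, if_neg hi, if_neg hj]
          rw [mul_comm _ (k i j), mul_assoc, inv_mul_cancel₀ (pow_ne_zero c hπ), mul_one, ha]
    · obtain ⟨u, hu⟩ := hkdet
      exact ⟨u, by rw [hu, Matrix.det_conj' ((Matrix.isUnit_iff_isUnit_det D).mpr hDdet)]⟩
    · have h1 : D * D⁻¹ = 1 := Matrix.mul_nonsing_inv _ hDdet
      calc k = (D * D⁻¹) * k * (D * D⁻¹) := by rw [h1, Matrix.one_mul, Matrix.mul_one]
        _ = D * (D⁻¹ * k * D) * D⁻¹ := by simp only [Matrix.mul_assoc]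

end ShalikaStmt12
end

section
/- Let n = 2m be even, and let e, l be integers with 0 ≤ e ≤ l. For a positive integer r and s ∈ ℤ set O_r(s) = diag(1_{r−1}, ϖ^s) · M_r(O) · diag(1_{r−1}, ϖ^s)^{-1} and R_r(s) = M_r(O) ∩ O_r(s). Then R_n(l) ∩ diag(1_m, ϖ^e·1_m) · M_n(O) · diag(1_m, ϖ^e·1_m)^{-1} equals the set of block matrices [[A,B],[C,D]] (blocks of size m×m) with A ∈ M_m(O), B ∈ M_m(O), D ∈ R_m(l), and diag(ϖ^e·1_{m−1}, ϖ^l)^{-1}·C ∈ M_m(O). -/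
open Matrix

namespace ShalikaStmt13


private lemma diag_inv {F : Type*} [Field F] {r : ℕ} {d : Fin r → F} (hd : ∀ i, d i ≠ 0) :
    (diagonal d)⁻¹ = diagonal (fun i => (d i)⁻¹) := by
  apply Matrix.inv_eq_right_inv
  rw [Matrix.diagonal_mul_diagonal]
  convert Matrix.diagonal_one
  exact mul_inv_cancel₀ (hd _)

private lemma key {F : Type*} [Field F] (S : Subring F) {r : ℕ} (d : Fin r → F)
    (hd : ∀ i, d i ≠ 0) (g : Matrix (Fin r) (Fin r) F) :
    (∃ h : Matrix (Fin r) (Fin r) F, (∀ i j, h i j ∈ S) ∧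
        g = diagonal d * h * (diagonal d)⁻¹) ↔
      ∀ i j, (d i)⁻¹ * g i j * d j ∈ S := by
  rw [diag_inv hd]
  constructor
  · rintro ⟨h, hh, rfl⟩ i j
    have h1 : ((diagonal d * h * diagonal fun i => (d i)⁻¹) i j) = d i * h i j * (d j)⁻¹ := by
      rw [Matrix.mul_diagonal, Matrix.diagonal_mul]
    rw [h1]
    have : (d i)⁻¹ * (d i * h i j * (d j)⁻¹) * d j = h i j := by
      have hi := hd i; have hj := hd j
      field_simp
    rw [this]; exact hh i j
  · intro H
    refine ⟨(diagonal fun i => (d i)⁻¹) * g * diagonal d, fun i j => ?_, ?_⟩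
    · rw [Matrix.mul_diagonal, Matrix.diagonal_mul]; exact H i j
    · ext i j
      rw [Matrix.mul_diagonal, Matrix.diagonal_mul, Matrix.mul_diagonal, Matrix.diagonal_mul]
      have hi := hd i; have hj := hd j
      field_simp
/-- For `n = 2m` and integers `0 ≤ e ≤ l`, the ring
`R_n(l) ∩ diag(1_m, ϖ^e·1_m) · M_n(O) · diag(1_m, ϖ^e·1_m)⁻¹` consists of the block matrices
`[[A,B],[C,D]]` with `A, B ∈ M_m(O)`, `D ∈ R_m(l)` and
`diag(ϖ^e·1_{m−1}, ϖ^l)⁻¹ · C ∈ M_m(O)`, where `O_r(s) = diag(1_{r−1},ϖ^s)·M_r(O)·diag(1_{r−1},ϖ^s)⁻¹`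
and `R_r(s) = M_r(O) ∩ O_r(s)`. -/
theorem stmt13 {O F : Type*} [CommRing O] [IsDomain O] [IsDiscreteValuationRing O]
    [Field F] [Algebra O F] [IsFractionRing O F]
    (ϖ : O) (hϖ : Irreducible ϖ) (m : ℕ) (hm : 0 < m) (e l : ℤ) (he : 0 ≤ e) (hel : e ≤ l) :
    let πF : F := algebraMap O F ϖ
    let MO : (r : ℕ) → Set (Matrix (Fin r) (Fin r) F) :=
      fun r => {g | ∀ i j, ∃ a : O, algebraMap O F a = g i j}
    let Ds : (r : ℕ) → ℤ → Matrix (Fin r) (Fin r) F :=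
      fun r s => diagonal (fun i => if (i : ℕ) < r - 1 then 1 else πF ^ s)
    let Oset : (r : ℕ) → ℤ → Set (Matrix (Fin r) (Fin r) F) :=
      fun r s => {g | ∃ h ∈ MO r, g = Ds r s * h * (Ds r s)⁻¹}
    let Rset : (r : ℕ) → ℤ → Set (Matrix (Fin r) (Fin r) F) :=
      fun r s => MO r ∩ Oset r s
    let De : Matrix (Fin (m + m)) (Fin (m + m)) F :=
      diagonal (fun i => if (i : ℕ) < m then 1 else πF ^ e)
    Rset (m + m) l ∩ {g | ∃ h ∈ MO (m + m), g = De * h * De⁻¹} =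
      {g | ∃ A B C D : Matrix (Fin m) (Fin m) F,
        A ∈ MO m ∧ B ∈ MO m ∧ D ∈ Rset m l ∧
        (diagonal (fun i : Fin m => if (i : ℕ) < m - 1 then πF ^ e else πF ^ l))⁻¹ * C ∈ MO m ∧
        g = Matrix.reindex finSumFinEquiv finSumFinEquiv (Matrix.fromBlocks A B C D)} := by
  intro πF MO Ds Oset Rset De
  have hπ : πF ≠ 0 := by
    show algebraMap O F ϖ ≠ 0
    exact (map_ne_zero_iff _ (IsFractionRing.injective O F)).mpr hϖ.ne_zero
  set S : Subring F := (algebraMap O F).range with hSdef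
  have hMO : ∀ (r : ℕ) (h : Matrix (Fin r) (Fin r) F), h ∈ MO r ↔ ∀ i j, h i j ∈ S :=
    fun r h => forall_congr' fun i => forall_congr' fun j => RingHom.mem_range.symm
  have hpow : ∀ s : ℤ, 0 ≤ s → πF ^ s ∈ S := by
    intro s hs
    refine RingHom.mem_range.mpr ⟨ϖ ^ s.toNat, ?_⟩
    rw [map_pow, ← zpow_natCast, Int.toNat_of_nonneg hs]
  have hle : ∀ x : F, (πF ^ l)⁻¹ * x ∈ S → (πF ^ e)⁻¹ * x ∈ S := by
    intro x hx
    have h1 : (πF ^ e)⁻¹ * x = πF ^ (l - e) * ((πF ^ l)⁻¹ * x) := by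
      rw [← _root_.zpow_neg, ← _root_.zpow_neg, ← mul_assoc, ← zpow_add₀ hπ,
        show l - e + -l = -e by ring]
    rw [h1]
    exact S.mul_mem (hpow _ (by omega)) hx
  have hconj : ∀ (y : F), y ≠ 0 → ∀ x : F, y⁻¹ * x * y = x := by
    intro y hy x
    rw [mul_comm y⁻¹ x, mul_assoc, inv_mul_cancel₀ hy, mul_one]
  have keyform : ∀ (r : ℕ) (d : Fin r → F) (hd : ∀ i, d i ≠ 0) (g : Matrix (Fin r) (Fin r) F),
      (∃ h ∈ MO r, g = diagonal d * h * (diagonal d)⁻¹) ↔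
        ∀ i j, (d i)⁻¹ * g i j * d j ∈ S := by
    intro r d hd g
    constructor
    · rintro ⟨h, h1, h2⟩
      exact (key S d hd g).mp ⟨h, (hMO r h).mp h1, h2⟩
    · intro H
      obtain ⟨h, h1, h2⟩ := (key S d hd g).mpr H
      exact ⟨h, (hMO r h).mpr h1, h2⟩
  set dl : Fin (m + m) → F := fun i => if (i : ℕ) < m + m - 1 then 1 else πF ^ l with hdl
  set dm : Fin m → F := fun i => if (i : ℕ) < m - 1 then 1 else πF ^ l with hdm
  set dc : Fin m → F := fun i => if (i : ℕ) < m - 1 then πF ^ e else πF ^ l with hdc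
  set de : Fin (m + m) → F := fun i => if (i : ℕ) < m then 1 else πF ^ e with hde
  have hdl0 : ∀ i, dl i ≠ 0 := by
    intro i; simp only [hdl]; split
    · exact one_ne_zero
    · exact zpow_ne_zero _ hπ
  have hdm0 : ∀ i, dm i ≠ 0 := by
    intro i; simp only [hdm]; split
    · exact one_ne_zero
    · exact zpow_ne_zero _ hπ
  have hdc0 : ∀ i, dc i ≠ 0 := by
    intro i; simp only [hdc]; split
    · exact zpow_ne_zero _ hπ
    · exact zpow_ne_zero _ hπ
  have hde0 : ∀ i, de i ≠ 0 := by
    intro i; simp only [hde]; split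
    · exact one_ne_zero
    · exact zpow_ne_zero _ hπ
  have Edl1 : ∀ i : Fin m, dl (finSumFinEquiv (Sum.inl i)) = 1 := by
    intro i
    have hi := i.isLt
    simp only [hdl, finSumFinEquiv_apply_left, Fin.coe_castAdd]
    rw [if_pos (by omega)]
  have Edl2 : ∀ i : Fin m, dl (finSumFinEquiv (Sum.inr i)) = dm i := by
    intro i
    have hi := i.isLt
    simp only [hdl, hdm, finSumFinEquiv_apply_right, Fin.coe_natAdd]
    by_cases h : (i : ℕ) < m - 1
    · rw [if_pos (by omega), if_pos h]
    · rw [if_neg (by omega), if_neg h]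
  have Ede1 : ∀ i : Fin m, de (finSumFinEquiv (Sum.inl i)) = 1 := by
    intro i
    have hi := i.isLt
    simp only [hde, finSumFinEquiv_apply_left, Fin.coe_castAdd]
    rw [if_pos (by omega)]
  have Ede2 : ∀ i : Fin m, de (finSumFinEquiv (Sum.inr i)) = πF ^ e := by
    intro i
    simp only [hde, finSumFinEquiv_apply_right, Fin.coe_natAdd]
    rw [if_neg (by omega)]
  ext g
  constructor
  · intro hg
    have hg1' := (hMO _ g).mp hg.1.1
    have hg2' := (keyform _ dl hdl0 g).mp hg.1.2
    have hg3' := (keyform _ de hde0 g).mp hg.2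
    refine ⟨of fun i j => g (finSumFinEquiv (Sum.inl i)) (finSumFinEquiv (Sum.inl j)),
            of fun i j => g (finSumFinEquiv (Sum.inl i)) (finSumFinEquiv (Sum.inr j)),
            of fun i j => g (finSumFinEquiv (Sum.inr i)) (finSumFinEquiv (Sum.inl j)),
            of fun i j => g (finSumFinEquiv (Sum.inr i)) (finSumFinEquiv (Sum.inr j)),
            (hMO m _).mpr fun i j => hg1' _ _,
            (hMO m _).mpr fun i j => hg1' _ _,
            ⟨(hMO m _).mpr fun i j => hg1' _ _, (keyform m dm hdm0 _).mpr fun i j => ?_⟩,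
            ?_, ?_⟩
    · have h2 := hg2' (finSumFinEquiv (Sum.inr i)) (finSumFinEquiv (Sum.inr j))
      rw [Edl2, Edl2] at h2
      exact h2
    · show (diagonal dc)⁻¹ * _ ∈ MO m
      refine (hMO m _).mpr fun i j => ?_
      rw [diag_inv hdc0, Matrix.diagonal_mul]
      by_cases hi : (i : ℕ) < m - 1
      · have h2 := hg3' (finSumFinEquiv (Sum.inr i)) (finSumFinEquiv (Sum.inl j))
        rw [Ede2, Ede1, mul_one] at h2
        simp only [hdc]
        rw [if_pos hi]
        exact h2
      · have h2 := hg2' (finSumFinEquiv (Sum.inr i)) (finSumFinEquiv (Sum.inl j))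
        rw [Edl2, Edl1, mul_one] at h2
        simp only [hdm, if_neg hi] at h2
        simp only [hdc]
        rw [if_neg hi]
        exact h2
    · ext i j
      obtain ⟨i, rfl⟩ := finSumFinEquiv.surjective i
      obtain ⟨j, rfl⟩ := finSumFinEquiv.surjective j
      rw [Matrix.reindex_apply, Matrix.submatrix_apply, Equiv.symm_apply_apply,
        Equiv.symm_apply_apply]
      rcases i with i | i <;> rcases j with j | j <;> rfl
  · rintro ⟨A, B, C, D, hA, hB, hD, hC, rfl⟩
    have hA' := (hMO m A).mp hA
    have hB' := (hMO m B).mp hB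
    have hD1' := (hMO m D).mp hD.1
    have hD2' := (keyform m dm hdm0 D).mp hD.2
    have hC' : ∀ i j, (dc i)⁻¹ * C i j ∈ S := by
      intro i j
      have h2 := (hMO m _).mp hC i j
      rw [diag_inv hdc0, Matrix.diagonal_mul] at h2
      exact h2
    have hCS : ∀ i j, C i j ∈ S := by
      intro i j
      have h2 := hC' i j
      have h3 : C i j = dc i * ((dc i)⁻¹ * C i j) := by
        rw [← mul_assoc, mul_inv_cancel₀ (hdc0 i), one_mul]
      rw [h3]
      refine S.mul_mem ?_ h2
      simp only [hdc]; split
      · exact hpow e he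
      · exact hpow l (le_trans he hel)
    have hG : ∀ p q, (reindex finSumFinEquiv finSumFinEquiv (fromBlocks A B C D))
        (finSumFinEquiv p) (finSumFinEquiv q) = fromBlocks A B C D p q := by
      intro p q
      rw [Matrix.reindex_apply, Matrix.submatrix_apply, Equiv.symm_apply_apply,
        Equiv.symm_apply_apply]
    refine ⟨⟨(hMO _ _).mpr ?_, (keyform _ dl hdl0 _).mpr ?_⟩, (keyform _ de hde0 _).mpr ?_⟩
    · intro i j
      obtain ⟨p, rfl⟩ := finSumFinEquiv.surjective i
      obtain ⟨q, rfl⟩ := finSumFinEquiv.surjective j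
      rw [hG]
      rcases p with i | i <;> rcases q with j | j
      · exact hA' i j
      · exact hB' i j
      · exact hCS i j
      · exact hD1' i j
    · intro i j
      obtain ⟨p, rfl⟩ := finSumFinEquiv.surjective i
      obtain ⟨q, rfl⟩ := finSumFinEquiv.surjective j
      rw [hG]
      rcases p with i | i <;> rcases q with j | j
      · rw [Edl1, Edl1, inv_one, one_mul, mul_one]; exact hA' i j
      · rw [Edl1, Edl2, inv_one, one_mul]
        simp only [hdm]; split
        · rw [mul_one]; exact hB' i j
        · exact S.mul_mem (hB' i j) (hpow l (le_trans he hel))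
      · rw [Edl2, Edl1, mul_one]
        by_cases hi : (i : ℕ) < m - 1
        · simp only [hdm, if_pos hi, inv_one, one_mul]
          exact hCS i j
        · simp only [hdm, if_neg hi]
          have h2 := hC' i j
          simp only [hdc, if_neg hi] at h2
          exact h2
      · rw [Edl2, Edl2]; exact hD2' i j
    · intro i j
      obtain ⟨p, rfl⟩ := finSumFinEquiv.surjective i
      obtain ⟨q, rfl⟩ := finSumFinEquiv.surjective j
      rw [hG]
      rcases p with i | i <;> rcases q with j | j
      · rw [Ede1, Ede1, inv_one, one_mul, mul_one]; exact hA' i j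
      · rw [Ede1, Ede2, inv_one, one_mul]
        exact S.mul_mem (hB' i j) (hpow e he)
      · rw [Ede2, Ede1, mul_one]
        by_cases hi : (i : ℕ) < m - 1
        · have h2 := hC' i j
          simp only [hdc, if_pos hi] at h2
          exact h2
        · have h2 := hC' i j
          simp only [hdc, if_neg hi] at h2
          exact hle _ h2
      · rw [Ede2, Ede2, hconj _ (zpow_ne_zero _ hπ)]
        exact hD1' i j


end ShalikaStmt13
end

section
/- Let r ≥ 1 and let c ≥ 1 be an integer. Let ψ : F → ℂ^× be an additive character with ψ(O) = {1} and ψ(𝔭^{-1}) ≠ {1}, extended to the upper unipotent group N_{r+1} ⊂ GL_{r+1}(F) by ψ(n) = ∏_{i=1}^{r} ψ(n_{i,i+1}), and let ω : F^× → ℂ^× be a group homomorphism. Suppose W : GL_{r+1}(F) → ℂ satisfies W(n·g) = ψ(n)·W(g) for all n ∈ N_{r+1}, and W(g·k) = ω(k_{r+1,r+1})·W(g) for all k ∈ Γ_{r+1}(c). Then for every f ∈ ℤ^r that does NOT satisfy f_1 ≥ f_2 ≥ … ≥ f_r ≥ 0, one has W(diag(ϖ^{f_1},…,ϖ^{f_r},1))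 = 0. -/
open Matrix

namespace ShalikaStmt14

variable {O F : Type*} [CommRing O] [IsDomain O] [IsDiscreteValuationRing O]
  [Field F] [Algebra O F] [IsFractionRing O F]

/-- `x ∈ F` lies in (the image of) `O`. -/
def IsInt (O : Type*) {F : Type*} [CommRing O] [Field F] [Algebra O F] (x : F) : Prop :=
  ∃ a : O, algebraMap O F a = x

/-- The upper triangular unipotent subgroup `N_{r+1} ⊂ GL_{r+1}(F)`. -/
def Nset (F : Type*) [Field F] (r : ℕ) : Set (Matrix (Fin (r + 1)) (Fin (r + 1)) F) :=
  {n | (∀ i j : Fin (r + 1), j < i → n i j = 0) ∧ ∀ i : Fin (r + 1), n i i = 1}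

/-- `Γ_{r+1}(c) = {k ∈ GL_{r+1}(O) : k_{r+1,1}, …, k_{r+1,r} ∈ 𝔭^c}`. -/
def Gammaset (O : Type*) (F : Type*) [CommRing O] [Field F] [Algebra O F]
    (ϖ : O) (r c : ℕ) : Set (Matrix (Fin (r + 1)) (Fin (r + 1)) F) :=
  {k | (∀ i j, IsInt O (k i j)) ∧ (∃ u : Oˣ, algebraMap O F (u : O) = k.det) ∧
    ∀ j : Fin (r + 1), (j : ℕ) < r →
      ∃ a : O, algebraMap O F (ϖ ^ c * a) = k (Fin.last r) j}

/-- If `W` on `GL_{r+1}(F)` transforms on the left under `N_{r+1}` by `ψ` (extended by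
`ψ(n) = ∏ ψ(n_{i,i+1})`) and on the right under `Γ_{r+1}(c)` by `ω(k_{r+1,r+1})`, where `ψ` is
trivial on `O` but not on `𝔭⁻¹` and `c ≥ 1`, then `W(diag(ϖ^{f_1},…,ϖ^{f_r},1)) = 0`
for every `f ∈ ℤ^r` that is not decreasing with nonnegative entries. -/
theorem stmt14 (ϖ : O) (hϖ : Irreducible ϖ) (r c : ℕ) (hr : 0 < r) (hc : 0 < c)
    (ψ : AddChar F ℂ)
    (hψ1 : ∀ a : O, ψ (algebraMap O F a) = 1)
    (hψ2 : ∃ x : F, IsInt O (x * algebraMap O F ϖ) ∧ ψ x ≠ 1)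
    (ω : Fˣ →* ℂˣ)
    (W : Matrix (Fin (r + 1)) (Fin (r + 1)) F → ℂ)
    (hW1 : ∀ nn g : Matrix (Fin (r + 1)) (Fin (r + 1)) F, nn ∈ Nset F r → IsUnit g.det →
      W (nn * g) = (∏ i : Fin r, ψ (nn i.castSucc i.succ)) * W g)
    (hW2 : ∀ g k : Matrix (Fin (r + 1)) (Fin (r + 1)) F, IsUnit g.det →
      k ∈ Gammaset O F ϖ r c → ∀ hu : IsUnit (k (Fin.last r) (Fin.last r)),
      W (g * k) = (ω hu.unit : ℂ) * W g) :
    ∀ f : Fin r → ℤ,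
      ¬ ((∀ i j : Fin r, i ≤ j → f j ≤ f i) ∧ ∀ i : Fin r, 0 ≤ f i) →
      W (diagonal (Fin.snoc (fun i : Fin r => (algebraMap O F ϖ) ^ f i) 1)) = 0 := by
  intro f hf
  set ϖF : F := algebraMap O F ϖ with hϖF
  have hϖ0 : ϖF ≠ 0 := by
    simp only [hϖF, Ne, map_eq_zero_iff _ (IsFractionRing.injective O F)]
    exact hϖ.ne_zero
  obtain ⟨x, ⟨a, ha⟩, hx⟩ := hψ2
  set g : Fin (r + 1) → ℤ := Fin.snoc f 0 with hg
  -- find a bad adjacent pair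
  have hbad : ∃ i : Fin r, g i.castSucc < g i.succ := by
    by_contra h
    push_neg at h
    have hanti : Antitone g := Fin.antitone_iff_succ_le.2 h
    apply hf
    constructor
    · intro i j hij
      have := hanti (Fin.castSucc_le_castSucc_iff.2 hij)
      simpa [hg, Fin.snoc_castSucc] using this
    · intro i
      have := hanti (Fin.castSucc_lt_last i).le
      simpa [hg, Fin.snoc_castSucc, Fin.snoc_last] using this
  obtain ⟨i, hi⟩ := hbad
  have hne : i.castSucc ≠ i.succ := (Fin.castSucc_lt_succ (i := i)).ne
  -- the diagonal matrix
  set d : Fin (r + 1) → F := fun j => ϖF ^ g j with hd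
  have hdeq : (Fin.snoc (fun i : Fin r => ϖF ^ f i) 1 : Fin (r + 1) → F) = d := by
    funext j
    refine Fin.lastCases ?_ ?_ j
    · simp [hd, hg, Fin.snoc_last]
    · intro j; simp [hd, hg, Fin.snoc_castSucc]
  have hd0 : ∀ j, d j ≠ 0 := fun j => zpow_ne_zero _ hϖ0
  set t : Matrix (Fin (r + 1)) (Fin (r + 1)) F := diagonal d with ht
  have htdet : IsUnit t.det := by
    rw [ht, det_diagonal, isUnit_iff_ne_zero]
    exact Finset.prod_ne_zero_iff.2 fun j _ => hd0 j
  -- the entry of the Γ matrix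
  set m : ℕ := (g i.succ - g i.castSucc - 1).toNat with hm
  set y : F := algebraMap O F (a * ϖ ^ m) with hy
  have hyx : y = x * ϖF ^ (g i.succ - g i.castSucc) := by
    have hmz : (m : ℤ) + 1 = g i.succ - g i.castSucc := by
      rw [hm, Int.toNat_of_nonneg (by omega)]; ring
    rw [hy, _root_.map_mul, ha, map_pow, ← hϖF, ← hmz, mul_assoc, ← zpow_natCast ϖF m,
      zpow_add_one₀ hϖ0, zpow_natCast]
    ring
  set nn : Matrix (Fin (r + 1)) (Fin (r + 1)) F := transvection i.castSucc i.succ x with hnn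
  set k : Matrix (Fin (r + 1)) (Fin (r + 1)) F := transvection i.castSucc i.succ y with hk
  -- key identity
  have hkey : nn * t = t * k := by
    ext p q
    rw [ht, mul_diagonal, diagonal_mul, hnn, hk]
    simp only [transvection, Matrix.add_apply, one_apply]
    by_cases hpq : p = q
    · subst hpq
      have hns : ¬(i.castSucc = p ∧ i.succ = p) := by
        rintro ⟨h1, h2⟩; exact hne (h1.trans h2.symm)
      simp [single_apply_of_ne _ _ _ _ _ hns]
    · by_cases hsp : i.castSucc = p ∧ i.succ = q
      · obtain ⟨h1, h2⟩ := hsp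
        subst h1; subst h2
        simp only [if_neg hpq, single_apply_same, zero_add, mul_zero, zero_mul]
        rw [hyx, mul_left_comm, ← zpow_add₀ hϖ0]
        have hz : g i.castSucc + (g i.succ - g i.castSucc) = g i.succ := by ring
        rw [hz]
      · simp [hpq, single_apply_of_ne _ _ _ _ _ hsp]
  -- nn ∈ Nset
  have hnmem : nn ∈ Nset F r := by
    constructor
    · intro p q hqp
      have : ¬(i.castSucc = p ∧ i.succ = q) := by
        rintro ⟨h1, h2⟩
        rw [← h1, ← h2] at hqp
        exact absurd hqp (not_lt.2 (Fin.castSucc_lt_succ (i := i)).le)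
      simp [hnn, transvection, one_apply, hqp.ne, hqp.ne', single_apply_of_ne _ _ _ _ _ this]
    · intro p
      have : ¬(i.castSucc = p ∧ i.succ = p) := by
        rintro ⟨h1, h2⟩; exact hne (h1.trans h2.symm)
      simp [hnn, transvection, one_apply, single_apply_of_ne _ _ _ _ _ this]
  -- the ψ-product over nn is ψ x
  have hprod : (∏ j : Fin r, ψ (nn j.castSucc j.succ)) = ψ x := by
    have hent : ∀ j : Fin r, nn j.castSucc j.succ = if j = i then x else 0 := by
      intro j
      by_cases hji : j = i
      · subst hji
        simp [hnn, transvection, one_apply, hne, single_apply_same]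
      · have h1 : ¬(i.castSucc = j.castSucc ∧ i.succ = j.succ) := by
          rintro ⟨h1, _⟩; exact hji (Fin.castSucc_injective _ h1).symm
        simp [hnn, transvection, one_apply, (Fin.castSucc_lt_succ (i := j)).ne,
          single_apply_of_ne _ _ _ _ _ h1, hji]
    calc (∏ j : Fin r, ψ (nn j.castSucc j.succ)) = ∏ j : Fin r, if j = i then ψ x else 1 := by
          refine Finset.prod_congr rfl fun j _ => ?_
          rw [hent j]; split <;> simp
      _ = ψ x := by simp
  -- k ∈ Gammaset
  have hkmem : k ∈ Gammaset O F ϖ r c := by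
    refine ⟨?_, ⟨1, by simp [hk, det_transvection_of_ne _ _ hne]⟩, ?_⟩
    · intro p q
      by_cases hpq : p = q
      · subst hpq
        have hns : ¬(i.castSucc = p ∧ i.succ = p) := by
          rintro ⟨h1, h2⟩; exact hne (h1.trans h2.symm)
        exact ⟨1, by simp [hk, transvection, one_apply,
          single_apply_of_ne _ _ _ _ _ hns]⟩
      · by_cases hsp : i.castSucc = p ∧ i.succ = q
        · obtain ⟨h1, h2⟩ := hsp
          subst h1; subst h2
          exact ⟨a * ϖ ^ m, by
            simp [hk, transvection, one_apply, hne, single_apply_same, ← hy]⟩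
        · exact ⟨0, by simp [hk, transvection, one_apply, hpq,
            single_apply_of_ne _ _ _ _ _ hsp]⟩
    · intro j hj
      have hjne : Fin.last r ≠ j := by
        intro h; rw [← h] at hj; simp at hj
      have hns : ¬(i.castSucc = Fin.last r ∧ i.succ = j) := by
        rintro ⟨h1, _⟩; exact (Fin.castSucc_lt_last i).ne h1
      exact ⟨0, by simp [hk, transvection, one_apply, hjne,
        single_apply_of_ne _ _ _ _ _ hns]⟩
  have e1 := hW1 nn t hnmem htdet
  rw [hprod] at e1
  have hk1 : k (Fin.last r) (Fin.last r) = 1 := by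
    have hns : ¬(i.castSucc = Fin.last r ∧ i.succ = Fin.last r) := by
      rintro ⟨h1, h2⟩; exact hne (h1.trans h2.symm)
    simp [hk, transvection, one_apply, single_apply_of_ne _ _ _ _ _ hns]
  have hu : IsUnit (k (Fin.last r) (Fin.last r)) := hk1 ▸ isUnit_one
  have e2 := hW2 t k htdet hkmem hu
  have hω : ω hu.unit = 1 := by
    have hval : (hu.unit : F) = 1 := by rw [IsUnit.unit_spec, hk1]
    rw [show hu.unit = 1 from Units.ext hval, _root_.map_one]
  rw [hω, Units.val_one, one_mul] at e2
  have hmain : ψ x * W t = W t := by rw [← e1, hkey, e2]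
  have hWt : W t = 0 := by
    by_contra h
    exact hx (mul_right_cancel₀ h (by rw [hmain, one_mul]))
  rw [hdeq]
  exact hWt

end ShalikaStmt14
end

section
/- Let n = 2m be even and l a positive integer. Let p ∈ GL_{n+2}(F) be of the form [[A, b, c],[0, t, z],[0, 0, 1]] (blocks of sizes n, 1, 1), where A ∈ GL_n(F), b, c are column vectors in F^n, z ∈ F, and t ∈ F^× with t ∉ O^×. Then p does not belong to the set {diag(g,1,1)·u·k : g ∈ P_n, u ∈ U, k ∈ C_{n+2}(l)}, where U is the group of matrices [[1_n, xᵀ, yᵀ],[0,1,w],[0,0,1]] with x, y ∈ F^n, w ∈ F. -/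
open Matrix

namespace ShalikaStmt15

variable {O F : Type*} [CommRing O] [IsDomain O] [IsDiscreteValuationRing O]
  [Field F] [Algebra O F] [IsFractionRing O F]

/-- `x ∈ F` lies in (the image of) `O`. -/
def IsInt (O : Type*) {F : Type*} [CommRing O] [Field F] [Algebra O F] (x : F) : Prop :=
  ∃ a : O, algebraMap O F a = x

/-- The mirabolic subgroup `P_N ⊂ GL_N(F)`: invertible matrices with last row `(0,…,0,1)`. -/
def Pset (F : Type*) [Field F] (N : ℕ) : Set (Matrix (Fin N) (Fin N) F) :=
  {p | IsUnit p.det ∧ ∀ i j : Fin N, (i : ℕ) = N - 1 →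
    p i j = if (j : ℕ) = N - 1 then 1 else 0}

/-- `P_N(O) = P_N ∩ GL_N(O)`. -/
def POset (O : Type*) (F : Type*) [CommRing O] [Field F] [Algebra O F] (N : ℕ) :
    Set (Matrix (Fin N) (Fin N) F) :=
  {p | p ∈ Pset F N ∧ (∀ i j, IsInt O (p i j)) ∧ ∃ u : Oˣ, algebraMap O F (u : O) = p.det}

/-- `C_N(l) = {p ∈ P_N(O) : p ≡ 1_N (mod 𝔭^l)}`. -/
def Cset (O : Type*) (F : Type*) [CommRing O] [Field F] [Algebra O F]
    (ϖ : O) (N l : ℕ) : Set (Matrix (Fin N) (Fin N) F) :=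
  {p | p ∈ POset O F N ∧ ∀ i j : Fin N,
    ∃ a : O, algebraMap O F (ϖ ^ l * a) = p i j - (if i = j then 1 else 0)}

/-- The unipotent matrix `[[1_n, xᵀ, yᵀ],[0,1,z],[0,0,1]]` of size `(n+2) × (n+2)`. -/
def bigU {F : Type*} [Field F] (n : ℕ) (x y : Fin n → F) (z : F) :
    Matrix (Fin (n + 2)) (Fin (n + 2)) F :=
  Matrix.of fun i j =>
    if i = j then 1
    else if hi : (i : ℕ) < n then
      (if (j : ℕ) = n then x ⟨i, hi⟩ else if (j : ℕ) = n + 1 then y ⟨i, hi⟩ else 0)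
    else if (i : ℕ) = n ∧ (j : ℕ) = n + 1 then z else 0

/-- The embedding `g ↦ diag(g, 1, 1)` of `n × n` matrices into `(n+2) × (n+2)` matrices. -/
def embed2 {F : Type*} [Field F] (n : ℕ) (g : Matrix (Fin n) (Fin n) F) :
    Matrix (Fin (n + 2)) (Fin (n + 2)) F :=
  Matrix.of fun i j =>
    if hi : (i : ℕ) < n then (if hj : (j : ℕ) < n then g ⟨i, hi⟩ ⟨j, hj⟩ else 0)
    else if (i : ℕ) = (j : ℕ) then 1 else 0

/-- The matrix `[[A, b, c],[0, t, z],[0, 0, 1]]` (blocks of sizes `n`, `1`, `1`). -/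
def pMat {F : Type*} [Field F] (n : ℕ) (A : Matrix (Fin n) (Fin n) F)
    (b c : Fin n → F) (t z : F) : Matrix (Fin (n + 2)) (Fin (n + 2)) F :=
  Matrix.of fun i j =>
    if hi : (i : ℕ) < n then
      (if hj : (j : ℕ) < n then A ⟨i, hi⟩ ⟨j, hj⟩
       else if (j : ℕ) = n then b ⟨i, hi⟩ else c ⟨i, hi⟩)
    else if (i : ℕ) = n then (if (j : ℕ) < n then 0 else if (j : ℕ) = n then t else z)
    else (if (j : ℕ) = n + 1 then 1 else 0)

theorem stmt15_aux (ϖ : O) (hϖ : Irreducible ϖ) (n l : ℕ) (hl : 0 < l)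
    (A : Matrix (Fin n) (Fin n) F) (b c : Fin n → F) (t z : F)
    (htu : ¬ ∃ u : Oˣ, algebraMap O F (u : O) = t) :
    ¬ ∃ (g : Matrix (Fin n) (Fin n) F) (x y : Fin n → F) (w : F)
        (k : Matrix (Fin (n + 2)) (Fin (n + 2)) F),
        k ∈ Cset O F ϖ (n + 2) l ∧
        pMat n A b c t z = embed2 n g * bigU n x y w * k := by
  rintro ⟨g, x, y, w, k, hk, heq⟩
  have hnlt : n < n + 2 := by omega
  have hn1lt : n + 1 < n + 2 := by omega
  set iN : Fin (n + 2) := ⟨n, hnlt⟩ with hiN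
  set iN1 : Fin (n + 2) := ⟨n + 1, hn1lt⟩ with hiN1
  have hne : iN ≠ iN1 := by simp [hiN, hiN1, Fin.ext_iff]
  -- row n of embed2 g * bigU
  have hrow : ∀ a, (embed2 n g * bigU n x y w) iN a
      = (if a = iN then (1 : F) else 0) + (if a = iN1 then w else 0) := by
    intro a
    rw [Matrix.mul_apply, Finset.sum_eq_single iN]
    · by_cases h1 : a = iN
      · subst h1
        simp [embed2, bigU, hiN, hiN1, Fin.ext_iff]
      · by_cases h2 : a = iN1
        · subst h2
          simp [embed2, bigU, hiN, hiN1, Fin.ext_iff] at h1 ⊢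
        · have h1' : (a : ℕ) ≠ n := by simpa [hiN, Fin.ext_iff] using h1
          have h2' : (a : ℕ) ≠ n + 1 := by simpa [hiN1, Fin.ext_iff] using h2
          simp [embed2, bigU, hiN, hiN1, Fin.ext_iff, h1, h2, h1', h2']
          omega
    · intro b' _ hb
      have hb' : (n : ℕ) ≠ (b' : ℕ) := by
        intro h; exact hb (by simp [hiN, Fin.ext_iff, h.symm])
      simp [embed2, hiN, hb']
    · simp
  -- row n+1 of embed2 g * bigU
  have hrow1 : ∀ a, (embed2 n g * bigU n x y w) iN1 a
      = (if a = iN1 then (1 : F) else 0) := by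
    intro a
    rw [Matrix.mul_apply, Finset.sum_eq_single iN1]
    · by_cases h1 : a = iN1
      · subst h1
        simp [embed2, bigU, hiN1, Fin.ext_iff]
      · have h1' : (a : ℕ) ≠ n + 1 := by simpa [hiN1, Fin.ext_iff] using h1
        simp [embed2, bigU, hiN1, Fin.ext_iff, h1, h1']
        omega
    · intro b' _ hb
      have hb' : (n + 1 : ℕ) ≠ (b' : ℕ) := by
        intro h; exact hb (by simp [hiN1, Fin.ext_iff, h.symm])
      simp [embed2, hiN1, hb']
    · simp
  have hp21 : pMat n A b c t z iN1 iN = 0 := by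
    simp only [pMat, Matrix.of_apply, hiN, hiN1, Fin.val_mk]
    split_ifs <;> first | rfl | omega
  have hp11 : pMat n A b c t z iN iN = t := by
    simp only [pMat, Matrix.of_apply, hiN, Fin.val_mk]
    split_ifs <;> first | rfl | omega
  -- entry (n+1, n) gives k iN1 iN = 0
  have hk21 : k iN1 iN = 0 := by
    have h := congrFun (congrFun heq iN1) iN
    rw [Matrix.mul_apply] at h
    simp only [hrow1, ite_mul, one_mul, zero_mul] at h
    rw [Finset.sum_ite_eq' Finset.univ iN1 (fun a => k a iN), if_pos (Finset.mem_univ _),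
      hp21] at h
    exact h.symm
  -- entry (n, n) gives t = k iN iN
  have hk11 : t = k iN iN := by
    have h := congrFun (congrFun heq iN) iN
    rw [Matrix.mul_apply] at h
    simp only [hrow, add_mul, ite_mul, one_mul, zero_mul, Finset.sum_add_distrib] at h
    rw [Finset.sum_ite_eq' Finset.univ iN (fun a => k a iN),
      Finset.sum_ite_eq' Finset.univ iN1 (fun a => w * k a iN), if_pos (Finset.mem_univ _),
      if_pos (Finset.mem_univ _), hp11, hk21, mul_zero, add_zero] at h
    exact h
  -- k iN iN is the image of a unit
  obtain ⟨a, ha⟩ := hk.2 iN iN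
  rw [if_pos rfl] at ha
  have hkval : k iN iN = algebraMap O F (1 + ϖ ^ l * a) := by
    rw [map_add, _root_.map_one, ha]; ring
  have hunit : IsUnit (1 + ϖ ^ l * a) := by
    by_contra hu
    have hmem : ϖ ^ l * a ∈ IsLocalRing.maximalIdeal O :=
      Ideal.mul_mem_right _ _
        (Ideal.pow_mem_of_mem _ ((IsLocalRing.mem_maximalIdeal _).2 hϖ.not_isUnit) _ hl)
    have hmem1 : 1 + ϖ ^ l * a ∈ IsLocalRing.maximalIdeal O :=
      (IsLocalRing.mem_maximalIdeal _).2 hu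
    have h1 : (1 : O) ∈ IsLocalRing.maximalIdeal O := by
      have := Ideal.sub_mem _ hmem1 hmem
      simpa using this
    exact (IsLocalRing.maximalIdeal.isMaximal O).ne_top
      (Ideal.eq_top_of_isUnit_mem _ h1 isUnit_one)
  obtain ⟨u, hu⟩ := hunit
  exact htu ⟨u, by rw [hu, ← hkval, ← hk11]⟩

/-- If `t ∈ F^×` and `t ∉ O^×`, then the matrix `[[A,b,c],[0,t,z],[0,0,1]]` does not lie in
`{diag(g,1,1)·u·k : g ∈ P_n, u ∈ U, k ∈ C_{n+2}(l)}` (here `n = 2m`, `m = m' + 1`). -/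
theorem stmt15 (ϖ : O) (hϖ : Irreducible ϖ) (m' l : ℕ) (hl : 0 < l)
    (A : Matrix (Fin ((m' + 1) + (m' + 1))) (Fin ((m' + 1) + (m' + 1))) F)
    (hA : IsUnit A.det) (b c : Fin ((m' + 1) + (m' + 1)) → F) (t z : F)
    (ht : t ≠ 0) (htu : ¬ ∃ u : Oˣ, algebraMap O F (u : O) = t) :
    ¬ ∃ (g : Matrix (Fin ((m' + 1) + (m' + 1))) (Fin ((m' + 1) + (m' + 1))) F)
        (x y : Fin ((m' + 1) + (m' + 1)) → F) (w : F)
        (k : Matrix (Fin (((m' + 1) + (m' + 1)) + 2)) (Fin (((m' + 1) + (m' + 1)) + 2)) F),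
        g ∈ Pset F ((m' + 1) + (m' + 1)) ∧
        k ∈ Cset O F ϖ (((m' + 1) + (m' + 1)) + 2) l ∧
        pMat ((m' + 1) + (m' + 1)) A b c t z =
          embed2 ((m' + 1) + (m' + 1)) g * bigU ((m' + 1) + (m' + 1)) x y w * k := by
  intro ⟨g, x, y, w, k, hg, hk, heq⟩
  exact stmt15_aux ϖ hϖ _ l hl A b c t z htu ⟨g, x, y, w, k, hk, heq⟩

end ShalikaStmt15
end
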